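/- Let (X,Q,H,Δ) be a reversible energy landscape satisfying the degenerate series Condition. For any state x ∉ {x₁¹,...,x₁ⁿ} with H(x) ≤ H(x₁ʳ) for some fixed r, we have Φ(x, x₀) - H(x) < Γ_m and Φ(x, x₁ʳ) - H(x₁ʳ) ≥ Γ_m. -/

import Mathlib

open Filter Topology
open scoped Classical

/-- Height along a path starting at `x` with subsequent states `l`. -/
def pathHeight {S : Type*} (H : S → ℝ) (Δ : S → S → ℝ) : S → List S → ℝ
  | x, [] => H x
  | x, y :: l => max (H x + Δ x y) (pathHeight H Δ y l)

/-- Communication height between two states. -/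
noncomputable def commHeight {S : Type*} (H : S → ℝ) (Δ : S → S → ℝ) (x y : S) : ℝ :=
  sInf {c | ∃ l : List S,
    (x :: l).getLast (List.cons_ne_nil x l) = y ∧ c = pathHeight H Δ x l}

/-- Communication height between a state and a set. -/
noncomputable def commSet {S : Type*} (H : S → ℝ) (Δ : S → S → ℝ) (x : S) (A : Set S) : ℝ :=
  sInf (commHeight H Δ x '' A)

/-- The states with energy strictly below that of `x`. -/
def Ibelow {S : Type*} (H : S → ℝ) (x : S) : Set S := {y | H y < H x}

/-- Stability level of a state. -/
noncomputable def stabLevel {S : Type*} (H : S → ℝ) (Δ : S → S → ℝ) (x : S) : ℝ :=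
  commSet H Δ x (Ibelow H x) - H x

/-- Ground states: global minima of the energy. -/
def stableSet {S : Type*} (H : S → ℝ) : Set S := {x | ∀ y, H x ≤ H y}

/-- Maximal stability level among non-stable states. -/
noncomputable def gammaM {S : Type*} (H : S → ℝ) (Δ : S → S → ℝ) : ℝ :=
  sSup (stabLevel H Δ '' (stableSet H)ᶜ)

/-- Metastable states: non-stable states attaining the maximal stability level. -/
def metaSet {S : Type*} (H : S → ℝ) (Δ : S → S → ℝ) : Set S :=
  {x | x ∉ stableSet H ∧ stabLevel H Δ x = gammaM H Δ}

set_option linter.unusedSectionVars false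

section aux
variable {S : Type*} [Fintype S] (H : S → ℝ) (Δ : S → S → ℝ)

lemma le_pathHeight_self (hΔ : ∀ x y, 0 ≤ Δ x y) :
    ∀ (l : List S) (x : S), H x ≤ pathHeight H Δ x l
  | [], x => le_of_eq rfl
  | y :: l, x => le_max_of_le_left (by linarith [hΔ x y])

lemma le_pathHeight_last (hΔ : ∀ x y, 0 ≤ Δ x y) :
    ∀ (l : List S) (x : S), H ((x :: l).getLast (List.cons_ne_nil x l)) ≤ pathHeight H Δ x l
  | [], x => le_of_eq rfl
  | y :: l, x => by
      rw [List.getLast_cons (List.cons_ne_nil y l)]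
      exact le_max_of_le_right (le_pathHeight_last hΔ l y)

/-- the set of path costs from x to y -/
def pathSet (x y : S) : Set ℝ :=
  {c | ∃ l : List S, (x :: l).getLast (List.cons_ne_nil x l) = y ∧ c = pathHeight H Δ x l}

lemma pathSet_nonempty (x y : S) : (pathSet H Δ x y).Nonempty :=
  ⟨pathHeight H Δ x [y], [y], by simp, rfl⟩

lemma pathHeight_mem_F : ∀ (l : List S) (x : S),
    pathHeight H Δ x l ∈ (Set.range fun p : S × S => H p.1 + Δ p.1 p.2) ∪ Set.range H
  | [], x => Or.inr ⟨x, rfl⟩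
  | y :: l, x => by
      rcases max_choice (H x + Δ x y) (pathHeight H Δ y l) with h | h <;>
        rw [pathHeight, h]
      · exact Or.inl ⟨(x, y), rfl⟩
      · exact pathHeight_mem_F l y

lemma pathSet_finite (x y : S) : (pathSet H Δ x y).Finite := by
  apply Set.Finite.subset
    (Set.Finite.union (Set.finite_range fun p : S × S => H p.1 + Δ p.1 p.2) (Set.finite_range H))
  rintro c ⟨l, -, rfl⟩
  exact pathHeight_mem_F H Δ l x

lemma commHeight_mem (x y : S) : commHeight H Δ x y ∈ pathSet H Δ x y :=
  (pathSet_nonempty H Δ x y).csInf_mem (pathSet_finite H Δ x y)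

lemma commHeight_le (x y : S) {c : ℝ} (hc : c ∈ pathSet H Δ x y) :
    commHeight H Δ x y ≤ c :=
  csInf_le (pathSet_finite H Δ x y).bddBelow hc

lemma H_le_commHeight (hΔ : ∀ x y, 0 ≤ Δ x y) (x y : S) : H x ≤ commHeight H Δ x y := by
  obtain ⟨l, -, hl⟩ := commHeight_mem H Δ x y
  exact hl ▸ le_pathHeight_self H Δ hΔ l x

lemma H_right_le_commHeight (hΔ : ∀ x y, 0 ≤ Δ x y) (x y : S) : H y ≤ commHeight H Δ x y := by
  obtain ⟨l, hlast, hl⟩ := commHeight_mem H Δ x y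
  exact hl ▸ hlast ▸ le_pathHeight_last H Δ hΔ l x

lemma commHeight_self_le (x : S) : commHeight H Δ x x ≤ H x :=
  commHeight_le H Δ x x ⟨[], by simp, rfl⟩

lemma pathHeight_append_le :
    ∀ (l₁ : List S) (x : S) (l₂ : List S),
      pathHeight H Δ x (l₁ ++ l₂) ≤
        max (pathHeight H Δ x l₁)
          (pathHeight H Δ ((x :: l₁).getLast (List.cons_ne_nil x l₁)) l₂)
  | [], x, l₂ => by simp
  | a :: t, x, l₂ => by
      have ih := pathHeight_append_le t a l₂
      simp only [List.cons_append, pathHeight]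
      rw [List.getLast_cons (List.cons_ne_nil a t)]
      rw [max_assoc]
      exact max_le_max le_rfl ih

lemma commHeight_triangle (x y z : S) :
    commHeight H Δ x z ≤ max (commHeight H Δ x y) (commHeight H Δ y z) := by
  obtain ⟨l₁, h1last, h1⟩ := commHeight_mem H Δ x y
  obtain ⟨l₂, h2last, h2⟩ := commHeight_mem H Δ y z
  have hmem : pathHeight H Δ x (l₁ ++ l₂) ∈ pathSet H Δ x z := by
    refine ⟨l₁ ++ l₂, ?_, rfl⟩
    rcases l₂ with _ | ⟨b, t⟩
    · simpa using h1last.trans h2last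
    · rw [List.getLast_cons (List.cons_ne_nil b t)] at h2last
      show ((x :: l₁) ++ (b :: t)).getLast (by simp) = z
      rw [List.getLast_append_of_ne_nil (h₂ := List.cons_ne_nil b t)]
      exact h2last
  rw [h1, h2]
  refine le_trans (commHeight_le H Δ x z hmem) ?_
  have := pathHeight_append_le H Δ l₁ x l₂
  rwa [h1last] at this

end aux

section sym
variable {S : Type*} [Fintype S] (H : S → ℝ) (Δ : S → S → ℝ)

lemma pathHeight_snoc (hΔ : ∀ x y, 0 ≤ Δ x y) (hrev : ∀ x y, H x + Δ x y = H y + Δ y x) :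
    ∀ (l : List S) (x z : S),
      pathHeight H Δ x (l ++ [z]) =
        max (pathHeight H Δ x l)
          (H ((x :: l).getLast (List.cons_ne_nil x l)) + Δ ((x :: l).getLast (List.cons_ne_nil x l)) z)
  | [], x, z => by
      simp only [List.nil_append, pathHeight, List.getLast_singleton]
      have h1 : H z ≤ H x + Δ x z := by rw [hrev]; linarith [hΔ z x]
      have h2 : H x ≤ H x + Δ x z := by linarith [hΔ x z]
      rw [max_eq_left h1, max_eq_right h2]
  | a :: t, x, z => by
      simp only [List.cons_append, pathHeight, List.append_eq]
      rw [pathHeight_snoc hΔ hrev t a z, List.getLast_cons (List.cons_ne_nil a t), max_assoc]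

lemma exists_reverse_path (hΔ : ∀ x y, 0 ≤ Δ x y) (hrev : ∀ x y, H x + Δ x y = H y + Δ y x) :
    ∀ (l : List S) (x y : S), (x :: l).getLast (List.cons_ne_nil x l) = y →
      ∃ l' : List S, (y :: l').getLast (List.cons_ne_nil y l') = x ∧
        pathHeight H Δ y l' = pathHeight H Δ x l
  | [], x, y, h => by
      simp only [List.getLast_singleton] at h
      subst h
      exact ⟨[], by simp, rfl⟩
  | a :: t, x, y, h => by
      rw [List.getLast_cons (List.cons_ne_nil a t)] at h
      obtain ⟨l', hl'last, hl'⟩ := exists_reverse_path hΔ hrev t a y h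
      refine ⟨l' ++ [x], ?_, ?_⟩
      · show ((y :: l') ++ [x]).getLast (by simp) = x
        exact List.getLast_concat
      · rw [pathHeight_snoc H Δ hΔ hrev, hl'last, hl', hrev]
        simp only [pathHeight]
        rw [max_comm]

lemma commHeight_symm (hΔ : ∀ x y, 0 ≤ Δ x y) (hrev : ∀ x y, H x + Δ x y = H y + Δ y x)
    (x y : S) : commHeight H Δ x y = commHeight H Δ y x := by
  have key : ∀ a b : S, commHeight H Δ a b ≤ commHeight H Δ b a := by
    intro a b
    obtain ⟨l, hlast, hl⟩ := commHeight_mem H Δ b a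
    obtain ⟨l', hl'last, hl'⟩ := exists_reverse_path H Δ hΔ hrev l b a hlast
    rw [hl]
    exact hl' ▸ commHeight_le H Δ a b ⟨l', hl'last, rfl⟩
  exact le_antisymm (key x y) (key y x)

end sym

section main
variable {S : Type*} [Fintype S] (H : S → ℝ) (Δ : S → S → ℝ)

lemma commSet_mem (x : S) {A : Set S} (hA : A.Nonempty) :
    ∃ y ∈ A, commSet H Δ x A = commHeight H Δ x y := by
  have hfin : (commHeight H Δ x '' A).Finite := (A.toFinite.image _)
  have hne : (commHeight H Δ x '' A).Nonempty := hA.image _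
  obtain ⟨y, hy, hval⟩ := hne.csInf_mem hfin
  exact ⟨y, hy, hval.symm⟩

lemma commSet_le (x : S) {A : Set S} {y : S} (hy : y ∈ A) :
    commSet H Δ x A ≤ commHeight H Δ x y :=
  csInf_le (A.toFinite.image _).bddBelow ⟨y, hy, rfl⟩

lemma stabLevel_le_gammaM {x : S} (hx : x ∉ stableSet H) :
    stabLevel H Δ x ≤ gammaM H Δ :=
  le_csSup ((stableSet H)ᶜ.toFinite.image _).bddAbove ⟨x, hx, rfl⟩

lemma H0_lt (x₀ : S) (hS : stableSet H = {x₀}) {x : S} (hx : x ∉ stableSet H) :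
    H x₀ < H x := by
  have hx0 : x₀ ∈ stableSet H := hS ▸ rfl
  simp only [stableSet, Set.mem_setOf_eq, not_forall, not_le] at hx
  obtain ⟨y, hy⟩ := hx
  exact lt_of_le_of_lt (hx0 y) hy

/-- Fact (A): `Φ(x,x₀) ≤ Γ_m + H x` for all `x`. -/
lemma comm_le_gamma (hΔ : ∀ x y, 0 ≤ Δ x y)
    (x₀ : S) (hS : stableSet H = {x₀}) (hΓ : 0 ≤ gammaM H Δ) :
    ∀ (k : ℕ) (x : S), (Finset.univ.filter fun z => H z < H x).card ≤ k →
      commHeight H Δ x x₀ ≤ gammaM H Δ + H x := by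
  intro k
  induction k with
  | zero =>
      intro x hk
      by_cases hx : x = x₀
      · rw [hx]; exact le_trans (commHeight_self_le H Δ x₀) (by linarith)
      · exfalso
        have hxs : x ∉ stableSet H := by rw [hS]; simpa using hx
        have h0 : H x₀ < H x := H0_lt H x₀ hS hxs
        have : x₀ ∈ Finset.univ.filter fun z => H z < H x := by simp [h0]
        have := Finset.card_pos.mpr ⟨x₀, this⟩
        omega
  | succ k ih =>
      intro x hk
      by_cases hx : x = x₀
      · rw [hx]; exact le_trans (commHeight_self_le H Δ x₀) (by linarith)
      · have hxs : x ∉ stableSet H := by rw [hS]; simpa using hx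
        have h0 : H x₀ < H x := H0_lt H x₀ hS hxs
        obtain ⟨y, hy, hyval⟩ := commSet_mem H Δ x (⟨x₀, h0⟩ : (Ibelow H x).Nonempty)
        have hyx : H y < H x := hy
        have hxy : commHeight H Δ x y ≤ gammaM H Δ + H x := by
          have := stabLevel_le_gammaM H Δ hxs
          rw [stabLevel, hyval] at this
          linarith
        have hcard : (Finset.univ.filter fun z => H z < H y).card ≤ k := by
          have hss : (Finset.univ.filter fun z => H z < H y) ⊂
              (Finset.univ.filter fun z => H z < H x) := by
            refine Finset.ssubset_iff_of_subset ?_ |>.mpr ⟨y, by simp [hyx], by simp⟩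
            intro z hz
            simp only [Finset.mem_filter, Finset.mem_univ, true_and] at hz ⊢
            exact hz.trans hyx
          have := Finset.card_lt_card hss
          omega
        have hyx0 : commHeight H Δ y x₀ ≤ gammaM H Δ + H y := ih y hcard
        refine le_trans (commHeight_triangle H Δ x y x₀) ?_
        exact max_le hxy (by linarith)

/-- Fact (A'): strict inequality off the metastable set. -/
lemma comm_lt_gamma (hΔ : ∀ x y, 0 ≤ Δ x y)
    (x₀ : S) (hS : stableSet H = {x₀}) (hΓ : 0 < gammaM H Δ)
    {x : S} (hx : x ∉ metaSet H Δ) :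
    commHeight H Δ x x₀ < gammaM H Δ + H x := by
  by_cases hx0 : x = x₀
  · rw [hx0]; exact lt_of_le_of_lt (commHeight_self_le H Δ x₀) (by linarith)
  · have hxs : x ∉ stableSet H := by rw [hS]; simpa using hx0
    have h0 : H x₀ < H x := H0_lt H x₀ hS hxs
    obtain ⟨y, hy, hyval⟩ := commSet_mem H Δ x (⟨x₀, h0⟩ : (Ibelow H x).Nonempty)
    have hyx : H y < H x := hy
    have hlt : stabLevel H Δ x < gammaM H Δ := by
      rcases lt_or_eq_of_le (stabLevel_le_gammaM H Δ hxs) with h | h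
      · exact h
      · exact absurd ⟨hxs, h⟩ hx
    have hxy : commHeight H Δ x y < gammaM H Δ + H x := by
      rw [stabLevel, hyval] at hlt; linarith
    have hyx0 : commHeight H Δ y x₀ ≤ gammaM H Δ + H y :=
      comm_le_gamma H Δ hΔ x₀ hS hΓ.le _ y le_rfl
    refine lt_of_le_of_lt (commHeight_triangle H Δ x y x₀) ?_
    exact max_lt hxy (by linarith)

end main


/-- For any state `x` outside `{x₁¹,…,x₁ⁿ}` with `H(x) ≤ H(x₁ʳ)`:
`Φ(x,x₀) - H(x) < Γ_m` and `Φ(x,x₁ʳ) - H(x₁ʳ) ≥ Γ_m`. -/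
theorem comm_bounds_below_x1 {S : Type*} [Fintype S]
    (H : S → ℝ) (Δ : S → S → ℝ)
    (hΔ : ∀ x y, 0 ≤ Δ x y) (hrev : ∀ x y, H x + Δ x y = H y + Δ y x)
    (n : ℕ) (hn : 1 ≤ n) (x₀ x₂ : S) (x₁ : Fin n → S)
    (hinj : Function.Injective x₁)
    (hS : stableSet H = {x₀})
    (hM : metaSet H Δ = insert x₂ (Set.range x₁))
    (hE2 : ∀ r, H (x₁ r) < H x₂)
    (hEq : ∀ r q, H (x₁ r) = H (x₁ q))
    (hBar : ∀ r q, commHeight H Δ (x₁ r) (x₁ q) - H (x₁ r) < gammaM H Δ)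
    (x : S) (hx : x ∉ Set.range x₁) (r : Fin n) (hHx : H x ≤ H (x₁ r)) :
    commHeight H Δ x x₀ - H x < gammaM H Δ ∧
    gammaM H Δ ≤ commHeight H Δ x (x₁ r) - H (x₁ r) := by
  have hΓ : 0 < gammaM H Δ := by
    have := hBar r r
    have := H_le_commHeight H Δ hΔ (x₁ r) (x₁ r)
    linarith
  -- x is not metastable
  have hxm : x ∉ metaSet H Δ := by
    rw [hM]
    rintro (rfl | hr)
    · exact absurd hHx (not_le.mpr (hE2 r))
    · exact hx hr
  have h1 : commHeight H Δ x x₀ < gammaM H Δ + H x :=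
    comm_lt_gamma H Δ hΔ x₀ hS hΓ hxm
  refine ⟨by linarith, ?_⟩
  by_contra hcon
  push_neg at hcon
  have hr1 : x₁ r ∈ metaSet H Δ := by rw [hM]; exact Set.mem_insert_iff.mpr (Or.inr ⟨r, rfl⟩)
  have hrs : x₁ r ∉ stableSet H := hr1.1
  have h0r : H x₀ < H (x₁ r) := H0_lt H x₀ hS hrs
  have hsym : commHeight H Δ (x₁ r) x = commHeight H Δ x (x₁ r) :=
    commHeight_symm H Δ hΔ hrev _ _
  have htri : commHeight H Δ (x₁ r) x₀ ≤
      max (commHeight H Δ (x₁ r) x) (commHeight H Δ x x₀) :=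
    commHeight_triangle H Δ _ _ _
  have hlt : commHeight H Δ (x₁ r) x₀ < gammaM H Δ + H (x₁ r) := by
    refine lt_of_le_of_lt htri (max_lt ?_ (by linarith))
    rw [hsym]; linarith
  have hle : commSet H Δ (x₁ r) (Ibelow H (x₁ r)) ≤ commHeight H Δ (x₁ r) x₀ :=
    commSet_le H Δ _ h0r
  have hstab : stabLevel H Δ (x₁ r) = gammaM H Δ := hr1.2
  rw [stabLevel] at hstab
  linarith
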